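/- Let 𝒜 be an m-th order n-dimensional tensor such that 𝒜 (or −𝒜) is a Z-tensor. Then 𝒜 has at most 2ⁿ − 1 Pareto eigenvalues. -/

import Mathlib

open Finset

noncomputable def tpow {m n : ℕ} (A : (Fin m → Fin n) → ℝ) (x : Fin n → ℝ) : ℝ :=
  ∑ i : Fin m → Fin n, A i * ∏ k, x (i k)

noncomputable def tmap {m n : ℕ} [NeZero m] (A : (Fin m → Fin n) → ℝ) (x : Fin n → ℝ)
    (i : Fin n) : ℝ :=
  ∑ j : Fin m → Fin n, if j 0 = i then A j * ∏ k ∈ Finset.univ.erase (0 : Fin m), x (j k) else 0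

def TSymm {m n : ℕ} (A : (Fin m → Fin n) → ℝ) : Prop :=
  ∀ (σ : Equiv.Perm (Fin m)) (i : Fin m → Fin n), A (i ∘ σ) = A i

lemma card_erase_zero {m : ℕ} [NeZero m] :
    (Finset.univ.erase (0 : Fin m)).card = m - 1 := by
  rw [Finset.card_erase_of_mem (Finset.mem_univ _), Finset.card_univ, Fintype.card_fin]

lemma tmap_neg {m n : ℕ} [NeZero m] (A : (Fin m → Fin n) → ℝ) (x : Fin n → ℝ) (i : Fin n) :
    tmap (fun j => -A j) x i = - tmap A x i := by
  unfold tmap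
  rw [← Finset.sum_neg_distrib]
  refine Finset.sum_congr rfl fun j _ => ?_
  by_cases h : j 0 = i <;> simp [h]

lemma key_ineq {m n : ℕ} [NeZero m]
    (A : (Fin m → Fin n) → ℝ)
    (hA : ∀ i : Fin m → Fin n, (∃ k k', i k ≠ i k') → A i ≤ 0)
    (lam mu : ℝ) (x y : Fin n → ℝ) (J : Finset (Fin n)) (hJ : J.Nonempty)
    (hx0 : ∀ i, 0 ≤ x i) (hy0 : ∀ i, 0 ≤ y i)
    (hxs : ∀ i, x i ≠ 0 ↔ i ∈ J) (hys : ∀ i, y i ≠ 0 ↔ i ∈ J)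
    (hxe : ∀ i ∈ J, lam * x i ^ (m-1) = tmap A x i)
    (hye : ∀ i ∈ J, mu * y i ^ (m-1) = tmap A y i) :
    mu ≤ lam := by
  obtain ⟨i0, hi0, hmin⟩ := Finset.exists_min_image J (fun i => y i / x i) hJ
  set t := y i0 / x i0 with ht
  have hxi0 : 0 < x i0 := lt_of_le_of_ne (hx0 i0) (Ne.symm ((hxs i0).2 hi0))
  have hyi0 : 0 < y i0 := lt_of_le_of_ne (hy0 i0) (Ne.symm ((hys i0).2 hi0))
  have htpos : 0 < t := div_pos hyi0 hxi0
  have hyi0t : y i0 = t * x i0 := by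
    rw [ht, div_mul_cancel₀ _ hxi0.ne']
  have hle : ∀ i, t * x i ≤ y i := by
    intro i
    by_cases hi : i ∈ J
    · have hxi : 0 < x i := lt_of_le_of_ne (hx0 i) (Ne.symm ((hxs i).2 hi))
      have := hmin i hi
      calc t * x i ≤ (y i / x i) * x i := by
            exact mul_le_mul_of_nonneg_right this (hx0 i)
        _ = y i := by field_simp
    · have hx : x i = 0 := by
        by_contra h; exact hi ((hxs i).1 h)
      have hy : y i = 0 := by
        by_contra h; exact hi ((hys i).1 h)
      simp [hx, hy]
  -- key: tmap A y i0 ≤ t^(m-1) * tmap A x i0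
  have hkey : tmap A y i0 ≤ t ^ (m-1) * tmap A x i0 := by
    unfold tmap
    rw [Finset.mul_sum]
    refine Finset.sum_le_sum fun j _ => ?_
    by_cases hj : j 0 = i0
    · simp only [hj, if_true]
      by_cases hc : ∃ k k', j k ≠ j k'
      · -- off-diagonal: A j ≤ 0
        have hAj := hA j hc
        have hprod : t ^ (m-1) * ∏ k ∈ Finset.univ.erase (0 : Fin m), x (j k)
            ≤ ∏ k ∈ Finset.univ.erase (0 : Fin m), y (j k) := by
          calc t ^ (m-1) * ∏ k ∈ Finset.univ.erase (0 : Fin m), x (j k)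
              = ∏ k ∈ Finset.univ.erase (0 : Fin m), (t * x (j k)) := by
                rw [Finset.prod_mul_distrib, Finset.prod_const, card_erase_zero]
            _ ≤ ∏ k ∈ Finset.univ.erase (0 : Fin m), y (j k) :=
              Finset.prod_le_prod (fun k _ => mul_nonneg htpos.le (hx0 _))
                (fun k _ => hle _)
        calc A j * ∏ k ∈ Finset.univ.erase (0 : Fin m), y (j k)
            ≤ A j * (t ^ (m-1) * ∏ k ∈ Finset.univ.erase (0 : Fin m), x (j k)) :=
              mul_le_mul_of_nonpos_left hprod hAj
          _ = t ^ (m-1) * (A j * ∏ k ∈ Finset.univ.erase (0 : Fin m), x (j k)) := by ring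
      · -- constant index
        push_neg at hc
        have hjk : ∀ k, j k = i0 := fun k => (hc k 0).trans hj
        have h1 : ∏ k ∈ Finset.univ.erase (0 : Fin m), y (j k) = y i0 ^ (m-1) := by
          rw [Finset.prod_congr rfl (fun k _ => by rw [hjk k]), Finset.prod_const,
            card_erase_zero]
        have h2 : ∏ k ∈ Finset.univ.erase (0 : Fin m), x (j k) = x i0 ^ (m-1) := by
          rw [Finset.prod_congr rfl (fun k _ => by rw [hjk k]), Finset.prod_const,
            card_erase_zero]
        rw [h1, h2, hyi0t, mul_pow]
        ring_nf
        exact le_refl _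
    · simp [hj]
  have h1 : mu * y i0 ^ (m-1) ≤ lam * y i0 ^ (m-1) := by
    calc mu * y i0 ^ (m-1) = tmap A y i0 := hye i0 hi0
      _ ≤ t ^ (m-1) * tmap A x i0 := hkey
      _ = t ^ (m-1) * (lam * x i0 ^ (m-1)) := by rw [hxe i0 hi0]
      _ = lam * (t * x i0) ^ (m-1) := by rw [mul_pow]; ring
      _ = lam * y i0 ^ (m-1) := by rw [← hyi0t]
  have hyp : 0 < y i0 ^ (m-1) := pow_pos hyi0 _
  exact le_of_mul_le_mul_right (by linarith) hyp

lemma uniq {m n : ℕ} [NeZero m]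
    (A : (Fin m → Fin n) → ℝ)
    (hA : (∀ i : Fin m → Fin n, (∃ k k', i k ≠ i k') → A i ≤ 0) ∨
          (∀ i : Fin m → Fin n, (∃ k k', i k ≠ i k') → 0 ≤ A i))
    (lam mu : ℝ) (x y : Fin n → ℝ) (J : Finset (Fin n)) (hJ : J.Nonempty)
    (hx0 : ∀ i, 0 ≤ x i) (hy0 : ∀ i, 0 ≤ y i)
    (hxs : ∀ i, x i ≠ 0 ↔ i ∈ J) (hys : ∀ i, y i ≠ 0 ↔ i ∈ J)
    (hxe : ∀ i ∈ J, lam * x i ^ (m-1) = tmap A x i)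
    (hye : ∀ i ∈ J, mu * y i ^ (m-1) = tmap A y i) :
    lam = mu := by
  rcases hA with hA | hA
  · exact le_antisymm
      (key_ineq A hA mu lam y x J hJ hy0 hx0 hys hxs hye hxe)
      (key_ineq A hA lam mu x y J hJ hx0 hy0 hxs hys hxe hye)
  · have hA' : ∀ i : Fin m → Fin n, (∃ k k', i k ≠ i k') → (fun j => -A j) i ≤ 0 := by
      intro i hi; simpa using hA i hi
    have hxe' : ∀ i ∈ J, (-lam) * x i ^ (m-1) = tmap (fun j => -A j) x i := by
      intro i hi; rw [tmap_neg, ← hxe i hi]; ring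
    have hye' : ∀ i ∈ J, (-mu) * y i ^ (m-1) = tmap (fun j => -A j) y i := by
      intro i hi; rw [tmap_neg, ← hye i hi]; ring
    have := le_antisymm
      (key_ineq _ hA' (-mu) (-lam) y x J hJ hy0 hx0 hys hxs hye' hxe')
      (key_ineq _ hA' (-lam) (-mu) x y J hJ hx0 hy0 hxs hys hxe' hye')
    linarith

/-- if 𝒜 or −𝒜 is a Z-tensor, then 𝒜 has at most 2ⁿ − 1 Pareto
eigenvalues. -/
theorem Z_tensor_pareto_eigenvalue_count {m n : ℕ} [NeZero m] (hm : 2 ≤ m)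
    (A : (Fin m → Fin n) → ℝ)
    (hA : (∀ i : Fin m → Fin n, (∃ k k', i k ≠ i k') → A i ≤ 0) ∨
          (∀ i : Fin m → Fin n, (∃ k k', i k ≠ i k') → 0 ≤ A i)) :
    ∃ S : Finset ℝ, S.card ≤ 2 ^ n - 1 ∧
      {lam : ℝ | ∃ x : Fin n → ℝ, (∀ i, 0 ≤ x i) ∧ x ≠ 0 ∧
        (∀ i, 0 ≤ lam * x i ^ (m - 1) - tmap A x i) ∧
        ∑ i, x i * (lam * x i ^ (m - 1) - tmap A x i) = 0} ⊆ ↑S := by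
  classical
  set P : ℝ → Finset (Fin n) → Prop := fun lam J =>
    ∃ x : Fin n → ℝ, (∀ i, 0 ≤ x i) ∧ (∀ i, x i ≠ 0 ↔ i ∈ J) ∧
      ∀ i ∈ J, lam * x i ^ (m-1) = tmap A x i with hP
  set g : Finset (Fin n) → ℝ := fun J => if h : ∃ lam, P lam J then h.choose else 0 with hg
  refine ⟨(Finset.univ.erase (∅ : Finset (Fin n))).image g, ?_, ?_⟩
  · calc ((Finset.univ.erase (∅ : Finset (Fin n))).image g).card
        ≤ (Finset.univ.erase (∅ : Finset (Fin n))).card := Finset.card_image_le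
      _ = 2 ^ n - 1 := by
        rw [Finset.card_erase_of_mem (Finset.mem_univ _), Finset.card_univ,
          Fintype.card_finset, Fintype.card_fin]
  · rintro lam ⟨x, hx0, hxne, hge, hsum⟩
    set J : Finset (Fin n) := Finset.univ.filter (fun i => x i ≠ 0) with hJdef
    have hmemJ : ∀ i, x i ≠ 0 ↔ i ∈ J := by
      intro i; simp [hJdef]
    have hJne : J.Nonempty := by
      obtain ⟨i, hi⟩ := Function.ne_iff.1 hxne
      exact ⟨i, (hmemJ i).1 hi⟩
    -- complementarity: each summand is zero
    have hzero : ∀ i ∈ Finset.univ, x i * (lam * x i ^ (m-1) - tmap A x i) = 0 :=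
      (Finset.sum_eq_zero_iff_of_nonneg
        (fun i _ => mul_nonneg (hx0 i) (hge i))).1 hsum
    have hPe : ∀ i ∈ J, lam * x i ^ (m-1) = tmap A x i := by
      intro i hi
      have hxi : x i ≠ 0 := (hmemJ i).2 hi
      have := hzero i (Finset.mem_univ i)
      rcases mul_eq_zero.1 this with h | h
      · exact absurd h hxi
      · linarith
    have hPlam : P lam J := ⟨x, hx0, hmemJ, hPe⟩
    have hex : ∃ l, P l J := ⟨lam, hPlam⟩
    have hgJ : g J = lam := by
      rw [hg]
      simp only [hex, dif_pos]
      obtain ⟨y, hy0, hys, hye⟩ := hex.choose_spec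
      exact uniq A hA _ lam y x J hJne hy0 hx0 hys hmemJ hye hPe
    refine Finset.mem_coe.2 (Finset.mem_image.2 ⟨J, ?_, hgJ⟩)
    refine Finset.mem_erase.2 ⟨?_, Finset.mem_univ _⟩
    exact Finset.nonempty_iff_ne_empty.1 hJne
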